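/- Let X be an Archimedean partially ordered vector space containing an order unit. Then the set U of all order units of X is downward directed and inf U = 0. -/

import Mathlib

/-- `u ∈ X₊` is an order unit. -/
def OrderUnit {X : Type*} [AddCommMonoid X] [PartialOrder X] (u : X) : Prop :=
  0 ≤ u ∧ ∀ x : X, ∃ n : ℕ, x ≤ n • u

lemma orderUnit_smul {X : Type*} [AddCommGroup X] [PartialOrder X] [IsOrderedAddMonoid X]
    [Module ℝ X] [PosSMulStrictMono ℝ X] [PosSMulReflectLT ℝ X]
    {u : X} (hu : OrderUnit u) {c : ℝ} (hc : 0 < c) : OrderUnit (c • u) := by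
  refine ⟨smul_nonneg hc.le hu.1, fun x => ?_⟩
  obtain ⟨n, hn⟩ := hu.2 x
  obtain ⟨m, hm⟩ := exists_nat_ge ((n : ℝ) / c)
  refine ⟨m, hn.trans ?_⟩
  rw [← Nat.cast_smul_eq_nsmul ℝ, ← Nat.cast_smul_eq_nsmul ℝ m, smul_smul]
  have hle : (n : ℝ) ≤ (m : ℝ) * c := (div_le_iff₀ hc).mp hm
  have h := smul_nonneg (sub_nonneg.mpr hle) hu.1
  rw [sub_smul, sub_nonneg] at h
  exact h

/-- In an Archimedean partially ordered vector space containing an order unit,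
the set of all order units is downward directed with infimum `0`. -/
theorem stmt17 {X : Type*} [AddCommGroup X] [PartialOrder X] [IsOrderedAddMonoid X]
    [Module ℝ X] [PosSMulStrictMono ℝ X] [PosSMulReflectLT ℝ X]
    (harch : ∀ x y : X, (∀ n : ℕ, n • x ≤ y) → x ≤ 0)
    (hex : ∃ u : X, OrderUnit u) :
    DirectedOn (· ≥ ·) {u : X | OrderUnit u} ∧
      IsGLB {u : X | OrderUnit u} 0 := by
  constructor
  · intro u hu v hv
    obtain ⟨n, hn⟩ := hv.2 u
    have hnpos : (0 : ℝ) < ((n : ℝ) + 1) := by positivity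
    have hcpos : (0 : ℝ) < ((n : ℝ) + 1)⁻¹ := by positivity
    refine ⟨(((n : ℝ) + 1)⁻¹) • u, orderUnit_smul hu hcpos, ?_, ?_⟩
    · -- ((n+1)⁻¹) • u ≤ u
      have h := smul_nonneg (sub_nonneg.mpr (by
        rw [inv_le_one_iff₀]; right; linarith : ((n : ℝ) + 1)⁻¹ ≤ 1)) hu.1
      rw [sub_smul, one_smul, sub_nonneg] at h
      exact h
    · -- ((n+1)⁻¹) • u ≤ v
      have h1 : u ≤ ((n : ℝ) + 1) • v := by
        have : u ≤ (n + 1) • v := by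
          rw [succ_nsmul]
          exact hn.trans (le_add_of_nonneg_right hv.1)
        rwa [← Nat.cast_smul_eq_nsmul ℝ (n + 1), Nat.cast_add, Nat.cast_one] at this
      have h2 := smul_le_smul_of_nonneg_left h1 hcpos.le
      rwa [smul_smul, inv_mul_cancel₀ hnpos.ne', one_smul] at h2
  · obtain ⟨u, hu⟩ := hex
    constructor
    · intro w hw
      exact hw.1
    · intro b hb
      refine harch b u (fun n => ?_)
      cases n with
      | zero => simpa using hu.1
      | succ m =>
        have hcpos : (0 : ℝ) < ((m : ℝ) + 1)⁻¹ := by positivity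
        have hbw : b ≤ (((m : ℝ) + 1)⁻¹) • u := hb (orderUnit_smul hu hcpos)
        have h2 := smul_le_smul_of_nonneg_left hbw (by positivity : (0:ℝ) ≤ (m : ℝ) + 1)
        rw [smul_smul, mul_inv_cancel₀ (by positivity : ((m:ℝ)+1) ≠ 0), one_smul] at h2
        calc (m + 1) • b = ((m : ℝ) + 1) • b := by
              rw [← Nat.cast_smul_eq_nsmul ℝ (m + 1), Nat.cast_add, Nat.cast_one]
          _ ≤ u := h2
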